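/- For n > 1, let L be a hyperbolic line in (ℝⁿ, d_h) not passing through 0. Then there exist linearly independent vectors a, b ∈ ℝⁿ with L = {sinh(t)·a + cosh(t)·b : t ∈ ℝ}, and for every real μ with |μ| > 1 the linear span of μ·a + b is a hyperbolic line through 0 disjoint from L; in particular there are infinitely many hyperbolic lines through 0 disjoint from L. -/

import Mathlib

noncomputable def arcosh (t : ℝ) : ℝ := Real.log (t + Real.sqrt (t ^ 2 - 1))

noncomputable def br {n : ℕ} (x : EuclideanSpace ℝ (Fin n)) : ℝ :=
  Real.sqrt (1 + ‖x‖ ^ 2)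

noncomputable def dh {n : ℕ} (x y : EuclideanSpace ℝ (Fin n)) : ℝ :=
  arcosh (br x * br y - inner ℝ x y)

noncomputable def T {n : ℕ} (y x : EuclideanSpace ℝ (Fin n)) : EuclideanSpace ℝ (Fin n) :=
  x + (br x + inner ℝ x y / (br y + 1)) • y

def IsHypLine {n : ℕ} (L : Set (EuclideanSpace ℝ (Fin n))) : Prop :=
  ∃ γ : ℝ → EuclideanSpace ℝ (Fin n), (∀ s t, dh (γ s) (γ t) = |s - t|) ∧ L = Set.range γ

lemma br_nonneg {n : ℕ} (x : EuclideanSpace ℝ (Fin n)) : 0 ≤ br x := Real.sqrt_nonneg _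

lemma one_le_br {n : ℕ} (x : EuclideanSpace ℝ (Fin n)) : 1 ≤ br x := by
  rw [show (1:ℝ) = Real.sqrt 1 by simp]
  exact Real.sqrt_le_sqrt (by nlinarith [sq_nonneg ‖x‖])

lemma br_sq {n : ℕ} (x : EuclideanSpace ℝ (Fin n)) : br x ^ 2 = 1 + ‖x‖ ^ 2 :=
  Real.sq_sqrt (by positivity)

lemma one_le_m {n : ℕ} (x y : EuclideanSpace ℝ (Fin n)) :
    1 ≤ br x * br y - (inner ℝ x y : ℝ) := by
  have h1 := real_inner_le_norm x y
  have h2 := br_sq x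
  have h3 := br_sq y
  have key : (1 + ‖x‖*‖y‖)^2 ≤ (br x * br y)^2 := by
    nlinarith [sq_nonneg (‖x‖-‖y‖), h2, h3]
  nlinarith [key, mul_nonneg (br_nonneg x) (br_nonneg y),
    mul_nonneg (norm_nonneg x) (norm_nonneg y)]

lemma cosh_arcosh {t : ℝ} (h : 1 ≤ t) : Real.cosh (arcosh t) = t := by
  have hs : Real.sqrt (t^2-1) ^ 2 = t^2 - 1 := Real.sq_sqrt (by nlinarith)
  have hv : 0 < t + Real.sqrt (t^2-1) := by positivity
  rw [arcosh, Real.cosh_eq, Real.exp_log hv, ← Real.log_inv, Real.exp_log (by positivity)]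
  have : (t + Real.sqrt (t^2-1))⁻¹ = t - Real.sqrt (t^2-1) := by
    rw [inv_eq_iff_eq_inv, eq_comm, inv_eq_iff_eq_inv]
    field_simp
    nlinarith
  rw [this]; ring

lemma arcosh_cosh (x : ℝ) : arcosh (Real.cosh x) = |x| := by
  rw [arcosh]
  have h1 : Real.cosh x ^ 2 - 1 = Real.sinh x ^ 2 := by
    have := Real.cosh_sq x; linarith
  have h2 : Real.sinh |x| = |Real.sinh x| := by
    rcases abs_cases x with ⟨h, _⟩ | ⟨h, hx⟩
    · rw [h, abs_of_nonneg (Real.sinh_nonneg_iff.2 (by rw [← h]; exact abs_nonneg x))]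
    · rw [h, Real.sinh_neg, abs_of_nonpos (by simpa using Real.sinh_le_sinh.2 hx.le)]
  rw [h1, Real.sqrt_sq_eq_abs, ← h2, ← Real.cosh_abs, Real.cosh_add_sinh, Real.log_exp]

lemma dh_eq_abs_imp {n : ℕ} {x y : EuclideanSpace ℝ (Fin n)} {r : ℝ}
    (h : dh x y = |r|) : br x * br y - (inner ℝ x y : ℝ) = Real.cosh r := by
  have h1 := one_le_m x y
  have := cosh_arcosh h1
  rw [dh] at h
  rw [← this, h, Real.cosh_abs]

lemma null_orth {n : ℕ} (w x : EuclideanSpace ℝ (Fin n)) (w₀ : ℝ)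
    (h1 : w₀ ^ 2 = ‖w‖ ^ 2) (h2 : w₀ * br x = (inner ℝ w x : ℝ)) : w = 0 := by
  have hc : |(inner ℝ w x : ℝ)| ≤ ‖w‖ * ‖x‖ := abs_real_inner_le_norm w x
  have hb := br_sq x
  have hcs : (inner ℝ w x : ℝ) * (inner ℝ w x : ℝ) ≤ ‖w‖^2 * ‖x‖^2 := by
    have := real_inner_mul_inner_self_le w x
    rwa [real_inner_self_eq_norm_sq, real_inner_self_eq_norm_sq] at this
  have h2' : (w₀ * br x) * (w₀ * br x) = (inner ℝ w x : ℝ) * (inner ℝ w x : ℝ) := by rw [h2]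
  have : ‖w‖ ^ 2 ≤ 0 := by nlinarith [sq_nonneg ‖w‖, sq_nonneg ‖x‖]
  have : ‖w‖ = 0 := by nlinarith [norm_nonneg w]
  simpa using this

lemma norm_comb {n : ℕ} (x y z : EuclideanSpace ℝ (Fin n)) (p q : ℝ) :
    ‖x - p • y - q • z‖ ^ 2 = ‖x‖ ^ 2 - 2*p*(inner ℝ x y : ℝ) - 2*q*(inner ℝ x z : ℝ)
      + p^2*‖y‖^2 + 2*p*q*(inner ℝ y z : ℝ) + q^2*‖z‖^2 := by
  rw [← real_inner_self_eq_norm_sq]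
  simp only [inner_sub_left, inner_sub_right, real_inner_smul_left, real_inner_smul_right,
    real_inner_self_eq_norm_sq, norm_smul, Real.norm_eq_abs, mul_pow, sq_abs]
  rw [real_inner_comm y x, real_inner_comm z x, real_inner_comm z y]
  ring

lemma norm_comb2 {n : ℕ} (y z : EuclideanSpace ℝ (Fin n)) (p q : ℝ) :
    ‖p • y + q • z‖ ^ 2 = p^2*‖y‖^2 + 2*p*q*(inner ℝ y z : ℝ) + q^2*‖z‖^2 := by
  rw [← real_inner_self_eq_norm_sq]
  simp only [inner_add_left, inner_add_right, real_inner_smul_left, real_inner_smul_right,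
    real_inner_self_eq_norm_sq, norm_smul, Real.norm_eq_abs, mul_pow, sq_abs]
  rw [real_inner_comm z y]
  ring

lemma inner_comb {n : ℕ} (x y z v : EuclideanSpace ℝ (Fin n)) (p q : ℝ) :
    (inner ℝ (x - p • y - q • z) v : ℝ) = (inner ℝ x v : ℝ) - p*(inner ℝ y v : ℝ) - q*(inner ℝ z v : ℝ) := by
  simp only [inner_sub_left, real_inner_smul_left]

lemma line_zero {n : ℕ} (w : EuclideanSpace ℝ (Fin n)) (hw : w ≠ 0) :
    IsHypLine (Submodule.span ℝ {w} : Set (EuclideanSpace ℝ (Fin n))) := by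
  have hwn : ‖w‖ ≠ 0 := norm_ne_zero_iff.2 hw
  have hu : ‖(‖w‖⁻¹ • w)‖ = 1 := norm_smul_inv_norm hw
  refine ⟨fun t => Real.sinh t • (‖w‖⁻¹ • w), ?_, ?_⟩
  · intro s t
    have hbr : ∀ r : ℝ, br (Real.sinh r • (‖w‖⁻¹ • w)) = Real.cosh r := by
      intro r
      rw [br, norm_smul, hu, mul_one, Real.norm_eq_abs,
        show (1 + |Real.sinh r| ^ 2) = Real.cosh r ^ 2 by
          rw [sq_abs]; have := Real.cosh_sq r; linarith]
      exact Real.sqrt_sq (Real.cosh_pos r).le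
    have hin : (inner ℝ (Real.sinh s • (‖w‖⁻¹ • w)) (Real.sinh t • (‖w‖⁻¹ • w)) : ℝ)
        = Real.sinh s * Real.sinh t := by
      rw [real_inner_smul_left, real_inner_smul_right, real_inner_self_eq_norm_sq, hu]; ring
    rw [dh, hbr, hbr, hin, show Real.cosh s * Real.cosh t - Real.sinh s * Real.sinh t
      = Real.cosh (s - t) from (Real.cosh_sub s t).symm, arcosh_cosh]
  · ext x
    simp only [SetLike.mem_coe, Submodule.mem_span_singleton, Set.mem_range]
    constructor
    · rintro ⟨c, rfl⟩
      refine ⟨Real.arsinh (c * ‖w‖), ?_⟩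
      rw [Real.sinh_arsinh, smul_smul]
      congr 1
      field_simp
    · rintro ⟨t, rfl⟩
      exact ⟨Real.sinh t * ‖w‖⁻¹, by rw [smul_smul]⟩

lemma scalar1 (st ct s1 c1 : ℝ) (h1 : ct^2 = st^2 + 1) (h2 : c1^2 = s1^2 + 1) (hs : s1 ≠ 0) :
    1 + (st/s1)^2 + (ct - st/s1*c1)^2 - 2*(st/s1)*(ct*c1 - st*s1)
      - 2*(ct - st/s1*c1)*ct + 2*(st/s1)*(ct - st/s1*c1)*c1 = 0 := by
  obtain ⟨k, hk⟩ : ∃ k, k = st/s1 := ⟨_, rfl⟩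
  have hst : st = k*s1 := by rw [hk, div_mul_cancel₀ st hs]
  rw [← hk]
  subst hst
  linear_combination (-1)*h1 - k^2*h2

lemma scalar2 (st ct s1 c1 : ℝ) (h1 : ct^2 = st^2 + 1) (h2 : c1^2 = s1^2 + 1) (hs : s1 ≠ 0) :
    1 - (st/s1)*(ct*c1 - st*s1) - (ct - st/s1*c1)*ct = 0 := by
  field_simp
  linear_combination -s1*h1

set_option maxHeartbeats 1000000

theorem hyperbolic_parallels {n : ℕ} (hn : 1 < n) (L : Set (EuclideanSpace ℝ (Fin n)))
    (hL : IsHypLine L) (h0 : (0 : EuclideanSpace ℝ (Fin n)) ∉ L) :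
    ∃ a b : EuclideanSpace ℝ (Fin n), LinearIndependent ℝ ![a, b] ∧
      L = {p | ∃ t : ℝ, p = Real.sinh t • a + Real.cosh t • b} ∧
      (∀ μ : ℝ, 1 < |μ| →
        IsHypLine (Submodule.span ℝ {μ • a + b} : Set (EuclideanSpace ℝ (Fin n))) ∧
        Disjoint (Submodule.span ℝ {μ • a + b} : Set (EuclideanSpace ℝ (Fin n))) L) ∧
      {L' : Set (EuclideanSpace ℝ (Fin n)) |
        IsHypLine L' ∧ (0 : EuclideanSpace ℝ (Fin n)) ∈ L' ∧ Disjoint L' L}.Infinite := by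
  obtain ⟨γ, hiso, rfl⟩ := hL
  have key : ∀ s u : ℝ, (inner ℝ (γ s) (γ u) : ℝ) = br (γ s) * br (γ u) - Real.cosh (s - u) := by
    intro s u
    have := dh_eq_abs_imp (hiso s u)
    linarith
  have nrm : ∀ s : ℝ, ‖γ s‖ ^ 2 = br (γ s) ^ 2 - 1 := by
    intro s
    have h := key s s
    rw [real_inner_self_eq_norm_sq, sub_self, Real.cosh_zero] at h
    nlinarith [h]
  have hs1 : Real.sinh 1 ≠ 0 := by positivity
  obtain ⟨A, hA⟩ : ∃ A' : EuclideanSpace ℝ (Fin n),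
      A' = (Real.sinh 1)⁻¹ • γ 1 - (Real.cosh 1 / Real.sinh 1) • γ 0 := ⟨_, rfl⟩
  obtain ⟨B, hB⟩ : ∃ B' : EuclideanSpace ℝ (Fin n), B' = γ 0 := ⟨_, rfl⟩
  obtain ⟨V, hV⟩ : ∃ V' : ℝ, V' = (br (γ 1) - Real.cosh 1 * br (γ 0)) / Real.sinh 1 := ⟨_, rfl⟩
  -- the representation of the curve
  have main : ∀ t : ℝ, γ t = Real.sinh t • A + Real.cosh t • B ∧
      br (γ t) = Real.sinh t * V + Real.cosh t * br B := by
    intro t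
    have hq1 : (br (γ t) - (Real.sinh t / Real.sinh 1) * br (γ 1)
        - (Real.cosh t - Real.sinh t / Real.sinh 1 * Real.cosh 1) * br (γ 0)) ^ 2
        = ‖γ t - (Real.sinh t / Real.sinh 1) • γ 1
          - (Real.cosh t - Real.sinh t / Real.sinh 1 * Real.cosh 1) • γ 0‖ ^ 2 := by
      rw [norm_comb, key t 1, key t 0, key 1 0, nrm t, nrm 1, nrm 0]
      simp only [sub_zero]
      rw [Real.cosh_sub t 1]
      linear_combination scalar1 (Real.sinh t) (Real.cosh t) (Real.sinh 1) (Real.cosh 1)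
        (Real.cosh_sq t) (Real.cosh_sq 1) hs1
    have hq2 : (br (γ t) - (Real.sinh t / Real.sinh 1) * br (γ 1)
        - (Real.cosh t - Real.sinh t / Real.sinh 1 * Real.cosh 1) * br (γ 0)) * br (γ t)
        = (inner ℝ (γ t - (Real.sinh t / Real.sinh 1) • γ 1
          - (Real.cosh t - Real.sinh t / Real.sinh 1 * Real.cosh 1) • γ 0) (γ t) : ℝ) := by
      rw [inner_comb, key t t, key 1 t, key 0 t, sub_self, Real.cosh_zero,
        Real.cosh_sub 1 t, Real.cosh_sub 0 t]
      simp only [Real.cosh_zero, Real.sinh_zero, one_mul, zero_mul, sub_zero]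
      linear_combination scalar2 (Real.sinh t) (Real.cosh t) (Real.sinh 1) (Real.cosh 1)
        (Real.cosh_sq t) (Real.cosh_sq 1) hs1
    have hzero := null_orth _ (γ t) _ hq1 hq2
    have h1 : γ t = (Real.sinh t / Real.sinh 1) • γ 1
        + (Real.cosh t - Real.sinh t / Real.sinh 1 * Real.cosh 1) • γ 0 := by
      rwa [sub_sub, sub_eq_zero] at hzero
    constructor
    · rw [h1, hA, hB]
      module
    · rw [hzero] at hq2
      rw [inner_zero_left] at hq2
      have hβt : (0:ℝ) < br (γ t) := lt_of_lt_of_le one_pos (one_le_br _)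
      have hW0 : br (γ t) - (Real.sinh t / Real.sinh 1) * br (γ 1)
          - (Real.cosh t - Real.sinh t / Real.sinh 1 * Real.cosh 1) * br (γ 0) = 0 := by
        rcases mul_eq_zero.1 hq2 with h | h
        · exact h
        · exact absurd h hβt.ne'
      rw [hV, hB]
      linear_combination hW0
  have hnB : ‖B‖ ^ 2 = br B ^ 2 - 1 := by rw [hB]; exact nrm 0
  have hab : (inner ℝ A B : ℝ) = V * br B := by
    have e10 := key 1 0
    rw [sub_zero, ← hB] at e10
    rw [(main 1).2, (main 1).1] at e10
    rw [inner_add_left, real_inner_smul_left, real_inner_smul_left,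
      real_inner_self_eq_norm_sq, hnB] at e10
    have := mul_left_cancel₀ hs1 (show Real.sinh 1 * (inner ℝ A B : ℝ)
      = Real.sinh 1 * (V * br B) by linear_combination e10)
    exact this
  have hnA : ‖A‖ ^ 2 = 1 + V ^ 2 := by
    have e := nrm 1
    rw [(main 1).2, (main 1).1, norm_comb2, hab, hnB] at e
    have := mul_left_cancel₀ (pow_ne_zero 2 hs1) (show Real.sinh 1 ^ 2 * ‖A‖^2
      = Real.sinh 1 ^ 2 * (1 + V^2) by linear_combination e + Real.cosh_sq 1)
    exact this
  have hbB : (0:ℝ) < br B := lt_of_lt_of_le one_pos (one_le_br B)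
  -- nondegeneracy
  have hD : br B ^ 2 - 1 - V ^ 2 ≠ 0 := by
    intro hd
    obtain ⟨c₀, hc₀⟩ : ∃ c' : ℝ, c' = V / br B := ⟨_, rfl⟩
    have hcb : c₀ * br B = V := by rw [hc₀]; field_simp
    have hc2lt : c₀ ^ 2 < 1 := by
      rw [hc₀, div_pow, div_lt_one (by positivity)]
      nlinarith
    have hBA : B = c₀ • A := by
      have hno : ‖B - c₀ • A - (0:ℝ) • (0:EuclideanSpace ℝ (Fin n))‖ ^ 2 = 0 := by
        rw [norm_comb]
        simp only [inner_zero_right, norm_zero]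
        have hba : (inner ℝ B A : ℝ) = V * br B := by rw [real_inner_comm]; exact hab
        rw [hba, hnA, hnB, ← hcb]
        have hd' : br B ^ 2 - 1 - (c₀ * br B) ^ 2 = 0 := by rw [hcb]; exact hd
        linear_combination (1 - c₀ ^ 2) * hd'
      rw [zero_smul, sub_zero] at hno
      have h5 : ‖B - c₀ • A‖ = 0 := by
        have hnn := norm_nonneg (B - c₀ • A)
        nlinarith [hno]
      have h6 := norm_eq_zero.1 h5
      rw [sub_eq_zero] at h6
      exact h6
    have h1c : 0 < 1 - c₀ ^ 2 := by linarith
    obtain ⟨r, hrdef⟩ : ∃ r : ℝ, r = Real.sqrt (1 - c₀ ^ 2) := ⟨_, rfl⟩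
    have hr0 : 0 < r := hrdef ▸ Real.sqrt_pos.2 h1c
    have hrsq : r ^ 2 = 1 - c₀ ^ 2 := hrdef ▸ Real.sq_sqrt h1c.le
    have hcosh : Real.cosh (Real.arsinh (-c₀ / r)) = 1 / r := by
      rw [Real.cosh_arsinh,
        show (1 : ℝ) + (-c₀ / r) ^ 2 = (1 / r) ^ 2 by
          field_simp
          linear_combination hrsq]
      exact Real.sqrt_sq (by positivity)
    apply h0
    refine ⟨Real.arsinh (-c₀ / r), ?_⟩
    rw [(main _).1, hBA, Real.sinh_arsinh, hcosh, smul_smul, ← add_smul,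
      show -c₀ / r + 1 / r * c₀ = 0 by ring, zero_smul]
  -- linear independence
  have hpair : ∀ s t : ℝ, s • A + t • B = 0 → s = 0 ∧ t = 0 := by
    intro s t hst
    have eA : s * ‖A‖ ^ 2 + t * (inner ℝ B A : ℝ) = 0 := by
      have := congrArg (fun x => (inner ℝ x A : ℝ)) hst
      simpa only [inner_add_left, real_inner_smul_left, real_inner_self_eq_norm_sq,
        inner_zero_left] using this
    have eB : s * (inner ℝ A B : ℝ) + t * ‖B‖ ^ 2 = 0 := by
      have := congrArg (fun x => (inner ℝ x B : ℝ)) hst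
      simpa only [inner_add_left, real_inner_smul_left, real_inner_self_eq_norm_sq,
        inner_zero_left] using this
    rw [real_inner_comm, hab, hnA] at eA
    rw [hab, hnB] at eB
    constructor
    · have hs0 : s * (br B ^ 2 - 1 - V ^ 2) = 0 := by
        linear_combination (br B ^ 2 - 1) * eA - (V * br B) * eB
      exact (mul_eq_zero.1 hs0).resolve_right hD
    · have ht0 : t * (br B ^ 2 - 1 - V ^ 2) = 0 := by
        linear_combination (1 + V ^ 2) * eB - (V * br B) * eA
      exact (mul_eq_zero.1 ht0).resolve_right hD
  have hlin : LinearIndependent ℝ ![A, B] := LinearIndependent.pair_iff.2 hpair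
  have hset : Set.range γ = {p | ∃ t : ℝ, p = Real.sinh t • A + Real.cosh t • B} := by
    ext x
    constructor
    · rintro ⟨t, rfl⟩
      exact ⟨t, (main t).1⟩
    · rintro ⟨t, rfl⟩
      exact ⟨t, (main t).1⟩
  have hpart2 : ∀ μ : ℝ, 1 < |μ| →
      IsHypLine (Submodule.span ℝ {μ • A + B} : Set (EuclideanSpace ℝ (Fin n))) ∧
      Disjoint (Submodule.span ℝ {μ • A + B} : Set (EuclideanSpace ℝ (Fin n))) (Set.range γ) := by
    intro μ hμ
    have hμ2 : 1 < μ ^ 2 := by nlinarith [sq_abs μ, abs_nonneg μ]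
    have hwne : μ • A + B ≠ 0 := by
      intro h
      exact one_ne_zero (hpair μ 1 (by simpa using h)).2
    refine ⟨line_zero _ hwne, Set.disjoint_left.2 ?_⟩
    rintro x hx hxr
    obtain ⟨c, rfl⟩ := Submodule.mem_span_singleton.1 hx
    obtain ⟨t, ht⟩ := hxr
    have h3 : (Real.sinh t - c * μ) • A + (Real.cosh t - c) • B = 0 := by
      have h4 : Real.sinh t • A + Real.cosh t • B - c • (μ • A + B) = 0 := by
        rw [← (main t).1, ht, sub_self]
      rw [← h4]; module
    obtain ⟨e1, e2⟩ := hpair _ _ h3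
    have hc' : c = Real.cosh t := by linarith
    have hs' : Real.sinh t = Real.cosh t * μ := by rw [← hc']; linarith
    have h5 := Real.cosh_sq t
    rw [hs'] at h5
    have h6 : Real.cosh t ^ 2 * 1 < Real.cosh t ^ 2 * μ ^ 2 :=
      mul_lt_mul_of_pos_left hμ2 (by positivity)
    nlinarith [h5, h6]
  refine ⟨A, B, hlin, hset, hpart2, ?_⟩
  have hinj : Set.InjOn
      (fun μ : ℝ => (Submodule.span ℝ {μ • A + B} : Set (EuclideanSpace ℝ (Fin n))))
      (Set.Ioi 1) := by
    intro μ hμ μ' hμ' heq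
    have h1 : μ' • A + B ∈ (Submodule.span ℝ {μ • A + B} : Set (EuclideanSpace ℝ (Fin n))) := by
      simp only at heq
      rw [heq]
      exact Submodule.mem_span_singleton_self _
    obtain ⟨c, hc⟩ := Submodule.mem_span_singleton.1 h1
    have h3 : (c * μ - μ') • A + (c - 1) • B = 0 := by
      have h4 : c • (μ • A + B) - (μ' • A + B) = 0 := by rw [hc, sub_self]
      rw [← h4]; module
    obtain ⟨e1, e2⟩ := hpair _ _ h3
    have hc1 : c = 1 := by linarith
    rw [hc1, one_mul] at e1
    linarith
  refine Set.Infinite.mono ?_ ((Set.Ioi_infinite (1 : ℝ)).image hinj)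
  rintro _ ⟨μ, hμ, rfl⟩
  have hμ' : 1 < |μ| := lt_of_lt_of_le hμ (le_abs_self μ)
  exact ⟨(hpart2 μ hμ').1, by exact Submodule.zero_mem _, (hpart2 μ hμ').2⟩
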